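/- Under the Bounded-Coefficient Scheme Hypotheses, assume additionally that all the maps T_1, …, T_m and I_1, …, I_m are continuous. Then for each i = 1, …, m, lim_{n→∞} ‖x_n − I_iⁿ x_n‖ = 0. -/

import Mathlib

open Filter

lemma seq_conv {d s t : ℕ → ℝ} (hd : ∀ n, 0 ≤ d n) (hs : ∀ n, 0 ≤ s n)
    (ht : ∀ n, 0 ≤ t n) (hss : Summable s) (hts : Summable t)
    (hrec : ∀ n, d (n+1) ≤ (1 + s n) * d n + t n) :
    ∃ L, Tendsto d atTop (nhds L) := by
  have hexp : ∀ n, (1:ℝ) + s n ≤ Real.exp (s n) := fun n => by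
    have := Real.add_one_le_exp (s n); linarith
  have hbd : ∀ n, d n ≤ (d 0 + ∑ k ∈ Finset.range n, t k) *
      Real.exp (∑ k ∈ Finset.range n, s k) := by
    intro n
    induction n with
    | zero => simp
    | succ n ih =>
      have h1 : d (n+1) ≤ (1 + s n) * d n + t n := hrec n
      have h2 : (1 + s n) * d n ≤ Real.exp (s n) *
          ((d 0 + ∑ k ∈ Finset.range n, t k) * Real.exp (∑ k ∈ Finset.range n, s k)) := by
        apply mul_le_mul (hexp n) ih (hd n)
        positivity
      have e1 : Real.exp (s n) * ((d 0 + ∑ k ∈ Finset.range n, t k) *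
          Real.exp (∑ k ∈ Finset.range n, s k)) =
          (d 0 + ∑ k ∈ Finset.range n, t k) * Real.exp (∑ k ∈ Finset.range (n+1), s k) := by
        rw [Finset.sum_range_succ, Real.exp_add]; ring
      have h3 : (1:ℝ) ≤ Real.exp (∑ k ∈ Finset.range (n+1), s k) :=
        Real.one_le_exp (Finset.sum_nonneg fun k _ => hs k)
      have h4 : t n ≤ t n * Real.exp (∑ k ∈ Finset.range (n+1), s k) :=
        le_mul_of_one_le_right (ht n) h3
      rw [Finset.sum_range_succ (f := t)]
      calc d (n+1) ≤ (1 + s n) * d n + t n := h1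
        _ ≤ (d 0 + ∑ k ∈ Finset.range n, t k) * Real.exp (∑ k ∈ Finset.range (n+1), s k)
            + t n * Real.exp (∑ k ∈ Finset.range (n+1), s k) := by
              rw [← e1]; exact add_le_add h2 h4
        _ = (d 0 + (∑ k ∈ Finset.range n, t k + t n)) *
            Real.exp (∑ k ∈ Finset.range (n+1), s k) := by ring
  set D : ℝ := (d 0 + ∑' k, t k) * Real.exp (∑' k, s k) with hD
  have hdD : ∀ n, d n ≤ D := by
    intro n
    refine (hbd n).trans ?_
    apply mul_le_mul
    · exact add_le_add_right (Summable.sum_le_tsum _ (fun k _ => ht k) hts) _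
    · exact Real.exp_le_exp.2 (Summable.sum_le_tsum _ (fun k _ => hs k) hss)
    · positivity
    · have : (0:ℝ) ≤ ∑' k, t k := tsum_nonneg ht
      have := hd 0; positivity
  set u : ℕ → ℝ := fun n => s n * D + t n with hu
  have huss : Summable u := (hss.mul_right D).add hts
  have hun : ∀ n, 0 ≤ u n := by
    intro n
    have hD0 : 0 ≤ D := le_trans (hd 0) (hdD 0)
    have := hs n; have := ht n; positivity
  have hrec2 : ∀ n, d (n+1) ≤ d n + u n := by
    intro n
    have := hrec n
    have h2 : s n * d n ≤ s n * D := mul_le_mul_of_nonneg_left (hdD n) (hs n)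
    simp only [hu]; nlinarith
  set e : ℕ → ℝ := fun n => d n - ∑ k ∈ Finset.range n, u k with he
  have hanti : Antitone e := by
    apply antitone_nat_of_succ_le
    intro n
    simp only [he, Finset.sum_range_succ]
    have := hrec2 n; linarith
  have hbdd : BddBelow (Set.range e) := by
    refine ⟨- ∑' k, u k, ?_⟩
    rintro _ ⟨n, rfl⟩
    simp only [he]
    have h1 : ∑ k ∈ Finset.range n, u k ≤ ∑' k, u k :=
      Summable.sum_le_tsum _ (fun k _ => hun k) huss
    have := hd n; linarith
  have hconv : Tendsto e atTop (nhds (⨅ n, e n)) := tendsto_atTop_ciInf hanti hbdd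
  have hsum : Tendsto (fun n => ∑ k ∈ Finset.range n, u k) atTop (nhds (∑' k, u k)) :=
    huss.hasSum.tendsto_sum_nat
  refine ⟨(⨅ n, e n) + ∑' k, u k, ?_⟩
  have : d = fun n => e n + ∑ k ∈ Finset.range n, u k := by
    funext n; simp [he]
  rw [this]
  exact hconv.add hsum

lemma summable_finset_sum {ι : Type*} (s : Finset ι) (f : ι → ℕ → ℝ)
    (hf : ∀ i ∈ s, Summable (f i)) : Summable (fun n => ∑ i ∈ s, f i n) := by
  classical
  induction s using Finset.induction with
  | empty => simpa using summable_zero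
  | @insert j s hj ih =>
    have h1 : (fun n => ∑ i ∈ insert j s, f i n) = fun n => f j n + ∑ i ∈ s, f i n := by
      funext n; rw [Finset.sum_insert hj]
    rw [h1]
    exact (hf j (Finset.mem_insert_self _ _)).add
      (ih fun i hi => hf i (Finset.mem_insert_of_mem hi))

lemma uc_lemma (E : Type*) [NormedAddCommGroup E] [NormedSpace ℝ E] [UniformConvexSpace E]
    {ε c : ℝ} (hε : 0 < ε) (hc : 0 < c) :
    ∃ δ, 0 < δ ∧ ∀ (u v : E), ‖u‖ ≤ 1 → ‖v‖ ≤ 1 → ε ≤ ‖u - v‖ →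
      ∀ lam : ℝ, c ≤ lam → lam ≤ 1 - c → ‖lam • u + (1 - lam) • v‖ ≤ 1 - δ := by
  obtain ⟨δ₀, hδ₀, h⟩ := exists_forall_closed_ball_dist_add_le_two_sub E hε
  refine ⟨c * δ₀ / 2, by positivity, fun u v hu hv huv lam hl hl' => ?_⟩
  have key : ∀ (u v : E), ‖u‖ ≤ 1 → ‖v‖ ≤ 1 → ε ≤ ‖u - v‖ →
      ∀ lam : ℝ, c ≤ lam → lam ≤ 1/2 → ‖lam • u + (1 - lam) • v‖ ≤ 1 - c * δ₀ / 2 := by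
    intro u v hu hv huv lam hl hl'
    have hmid : ‖u + v‖ ≤ 2 - δ₀ := h hu hv huv
    have hrw : lam • u + (1 - lam) • v = lam • (u + v) + (1 - 2*lam) • v := by
      module
    have h1 : ‖lam • u + (1 - lam) • v‖ ≤ lam * ‖u + v‖ + (1 - 2*lam) * ‖v‖ := by
      rw [hrw]
      refine (norm_add_le _ _).trans ?_
      rw [norm_smul, norm_smul, Real.norm_of_nonneg (by linarith : (0:ℝ) ≤ lam),
        Real.norm_of_nonneg (by linarith : (0:ℝ) ≤ 1 - 2*lam)]
    have h2 : lam * ‖u + v‖ ≤ lam * (2 - δ₀) :=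
      mul_le_mul_of_nonneg_left hmid (by linarith)
    have h3 : (1 - 2*lam) * ‖v‖ ≤ (1 - 2*lam) * 1 :=
      mul_le_mul_of_nonneg_left hv (by linarith)
    have h4 : c * δ₀ ≤ lam * δ₀ := mul_le_mul_of_nonneg_right hl (le_of_lt hδ₀)
    nlinarith
  rcases le_or_gt lam (1/2) with hcase | hcase
  · exact key u v hu hv huv lam hl hcase
  · have := key v u hv hu (by rwa [norm_sub_rev]) (1 - lam) (by linarith) (by linarith)
    have hrw : (1 - lam) • v + (1 - (1 - lam)) • u = lam • u + (1 - lam) • v := by module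
    rwa [hrw] at this

lemma schu {E : Type*} [NormedAddCommGroup E] [NormedSpace ℝ E] [UniformConvexSpace E]
    {d : ℝ} (hd : 0 ≤ d) {t : ℕ → ℝ} {lo hi : ℝ} (hlo : 0 < lo) (hhi : hi < 1)
    (ht : ∀ n, t n ∈ Set.Icc lo hi) {u v : ℕ → E}
    (hu : ∀ ε, 0 < ε → ∀ᶠ n in atTop, ‖u n‖ ≤ d + ε)
    (hv : ∀ ε, 0 < ε → ∀ᶠ n in atTop, ‖v n‖ ≤ d + ε)
    (hc : Tendsto (fun n => ‖t n • u n + (1 - t n) • v n‖) atTop (nhds d)) :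
    Tendsto (fun n => ‖u n - v n‖) atTop (nhds 0) := by
  rw [NormedAddCommGroup.tendsto_nhds_zero]
  intro ε hε
  rcases eq_or_lt_of_le hd with hd0 | hdpos
  · -- d = 0
    have h1 := hu (ε/3) (by positivity)
    have h2 := hv (ε/3) (by positivity)
    filter_upwards [h1, h2] with n hn1 hn2
    rw [Real.norm_of_nonneg (norm_nonneg _)]
    calc ‖u n - v n‖ ≤ ‖u n‖ + ‖v n‖ := norm_sub_le _ _
      _ ≤ (d + ε/3) + (d + ε/3) := add_le_add hn1 hn2
      _ < ε := by rw [← hd0]; linarith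
  · -- d > 0
    set c := min lo (1 - hi) with hcdef
    have hcpos : 0 < c := lt_min hlo (by linarith)
    have hε₀ : 0 < ε / (d + 1) := by positivity
    obtain ⟨δ, hδ, huc⟩ := uc_lemma E hε₀ hcpos
    set η := min 1 (d * δ / 2) with hηdef
    have hηpos : 0 < η := lt_min one_pos (by positivity)
    set R := d + η with hRdef
    have hRpos : 0 < R := by positivity
    have key : ∀ n, ‖u n‖ ≤ R → ‖v n‖ ≤ R → ε ≤ ‖u n - v n‖ →
        ‖t n • u n + (1 - t n) • v n‖ ≤ d - d * δ / 2 := by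
      intro n hun hvn hsep
      set u' := R⁻¹ • u n
      set v' := R⁻¹ • v n
      have hu' : ‖u'‖ ≤ 1 := by
        rw [norm_smul, Real.norm_of_nonneg (by positivity : (0:ℝ) ≤ R⁻¹)]
        rw [inv_mul_le_iff₀ hRpos]; simpa using hun
      have hv' : ‖v'‖ ≤ 1 := by
        rw [norm_smul, Real.norm_of_nonneg (by positivity : (0:ℝ) ≤ R⁻¹)]
        rw [inv_mul_le_iff₀ hRpos]; simpa using hvn
      have hsep' : ε / (d + 1) ≤ ‖u' - v'‖ := by
        have : u' - v' = R⁻¹ • (u n - v n) := by simp [u', v', smul_sub]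
        rw [this, norm_smul, Real.norm_of_nonneg (by positivity : (0:ℝ) ≤ R⁻¹)]
        have hR1 : R ≤ d + 1 := by
          simp only [hRdef]; have : η ≤ 1 := min_le_left _ _; linarith
        have h1 : ε / R ≤ R⁻¹ * ‖u n - v n‖ := by
          rw [div_eq_inv_mul]
          exact mul_le_mul_of_nonneg_left hsep (by positivity)
        have h2 : ε / (d+1) ≤ ε / R := div_le_div_of_nonneg_left (le_of_lt hε) hRpos hR1
        linarith
      have hlam1 : c ≤ t n := le_trans (min_le_left _ _) (ht n).1
      have hlam2 : t n ≤ 1 - c := by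
        have := (ht n).2
        have : c ≤ 1 - hi := min_le_right _ _
        have := (ht n).2
        linarith [min_le_right lo (1 - hi)]
      have := huc u' v' hu' hv' hsep' (t n) hlam1 hlam2
      have hcomb : R • (t n • u' + (1 - t n) • v') = t n • u n + (1 - t n) • v n := by
        simp only [u', v', smul_add, smul_comm R (t n), smul_comm R (1 - t n),
          smul_inv_smul₀ (ne_of_gt hRpos)]
      rw [← hcomb, norm_smul, Real.norm_of_nonneg (le_of_lt hRpos)]
      calc R * ‖t n • u' + (1 - t n) • v'‖ ≤ R * (1 - δ) := by
            apply mul_le_mul_of_nonneg_left this (le_of_lt hRpos)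
        _ ≤ d - d * δ / 2 := by
            have hη2 : η ≤ d * δ / 2 := min_le_right _ _
            have : R * (1 - δ) = d + η - d*δ - η*δ := by rw [hRdef]; ring
            nlinarith
    have hev1 := hu η hηpos
    have hev2 := hv η hηpos
    have hev3 : ∀ᶠ n in atTop, d - d * δ / 4 ≤ ‖t n • u n + (1 - t n) • v n‖ := by
      have : d - d*δ/4 < d := by nlinarith
      exact hc.eventually (eventually_ge_nhds this)
    filter_upwards [hev1, hev2, hev3] with n h1 h2 h3
    rw [Real.norm_of_nonneg (norm_nonneg _)]
    by_contra hcon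
    push_neg at hcon
    have := key n h1 h2 hcon
    nlinarith

set_option maxHeartbeats 2000000 in
theorem stmt8
    {X : Type*} [NormedAddCommGroup X] [NormedSpace ℝ X] [CompleteSpace X]
    [UniformConvexSpace X]
    {K : Set X} (hKne : K.Nonempty) (hKcl : IsClosed K) (hKco : Convex ℝ K)
    {m : ℕ} (hm : 1 ≤ m)
    (T I : Fin m → X → X)
    (hTK : ∀ i, Set.MapsTo (T i) K K) (hIK : ∀ i, Set.MapsTo (I i) K K)
    (hTcont : ∀ i, ContinuousOn (T i) K) (hIcont : ∀ i, ContinuousOn (I i) K)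
    (μ lam tμ tlam : Fin m → ℕ → ℝ)
    (hμ0 : ∀ i n, 0 ≤ μ i n) (hlam0 : ∀ i n, 0 ≤ lam i n)
    (htμ0 : ∀ i n, 0 ≤ tμ i n) (htlam0 : ∀ i n, 0 ≤ tlam i n)
    (hμlim : ∀ i, Tendsto (μ i) atTop (nhds 0)) (hlamlim : ∀ i, Tendsto (lam i) atTop (nhds 0))
    (htμlim : ∀ i, Tendsto (tμ i) atTop (nhds 0))
    (htlamlim : ∀ i, Tendsto (tlam i) atTop (nhds 0))
    (hμsum : ∀ i, Summable (μ i)) (hlamsum : ∀ i, Summable (lam i))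
    (htμsum : ∀ i, Summable (tμ i)) (htlamsum : ∀ i, Summable (tlam i))
    (φ ψ : Fin m → ℝ → ℝ)
    (hφmono : ∀ i, StrictMonoOn (φ i) (Set.Ici 0))
    (hφcont : ∀ i, ContinuousOn (φ i) (Set.Ici 0))
    (hφ0 : ∀ i, φ i 0 = 0) (hφpos : ∀ i t, 0 ≤ t → 0 ≤ φ i t)
    (hψmono : ∀ i, StrictMonoOn (ψ i) (Set.Ici 0))
    (hψcont : ∀ i, ContinuousOn (ψ i) (Set.Ici 0))
    (hψ0 : ∀ i, ψ i 0 = 0) (hψpos : ∀ i t, 0 ≤ t → 0 ≤ ψ i t)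
    (hI : ∀ i, ∀ n, 1 ≤ n → ∀ x ∈ K, ∀ y ∈ K,
      ‖(I i)^[n] x - (I i)^[n] y‖ ≤ ‖x - y‖ + tμ i n * ψ i ‖x - y‖ + tlam i n)
    (hT : ∀ i, ∀ n, 1 ≤ n → ∀ x ∈ K, ∀ y ∈ K,
      ‖(T i)^[n] x - (T i)^[n] y‖ ≤
        ‖(I i)^[n] x - (I i)^[n] y‖ + μ i n * φ i ‖(I i)^[n] x - (I i)^[n] y‖ + lam i n)
    (F : Set X)
    (hFdef : ∀ p, p ∈ F ↔ p ∈ K ∧ ∀ i, T i p = p ∧ I i p = p)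
    (hFne : F.Nonempty)
    (M Ms N Ns : Fin m → ℝ)
    (hM : ∀ i, 0 < M i) (hMs : ∀ i, 0 < Ms i) (hN : ∀ i, 0 < N i) (hNs : ∀ i, 0 < Ns i)
    (hφbound : ∀ i ξ, M i ≤ ξ → φ i ξ ≤ Ms i * ξ)
    (hψbound : ∀ i ζ, N i ≤ ζ → ψ i ζ ≤ Ns i * ζ)
    (alo ahi blo bhi : ℝ)
    (halo : 0 < alo) (hahi : alo < ahi) (hahi1 : ahi < 1)
    (hblo : 0 < blo) (hbhi : blo < bhi) (hbhi1 : bhi < 1)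
    (a b : Fin (m + 1) → ℕ → ℝ)
    (ha : ∀ j n, a j n ∈ Set.Icc alo ahi) (hb : ∀ j n, b j n ∈ Set.Icc blo bhi)
    (hasum : ∀ n, ∑ j, a j n = 1) (hbsum : ∀ n, ∑ j, b j n = 1)
    (x y : ℕ → X) (hx0 : x 0 ∈ K)
    (hy : ∀ n, y n = b 0 n • x n + ∑ i : Fin m, b i.succ n • (I i)^[n] (x n))
    (hxrec : ∀ n, x (n + 1) = a 0 n • x n + ∑ i : Fin m, a i.succ n • (T i)^[n] (y n))
    : ∀ i, Tendsto (fun n => ‖x n - (I i)^[n] (x n)‖) atTop (nhds 0) := by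
  obtain ⟨p, hpF⟩ := hFne
  rw [hFdef] at hpF
  obtain ⟨hpK, hpfix⟩ := hpF
  have hIfix : ∀ i n, (I i)^[n] p = p := fun i n => Function.iterate_fixed (hpfix i).2 n
  have hTfix : ∀ i n, (T i)^[n] p = p := fun i n => Function.iterate_fixed (hpfix i).1 n
  have hIiter : ∀ i n, Set.MapsTo ((I i)^[n]) K K := fun i n => (hIK i).iterate n
  have hTiter : ∀ i n, Set.MapsTo ((T i)^[n]) K K := fun i n => (hTK i).iterate n
  have ha0 : ∀ j n, 0 ≤ a j n := fun j n => le_trans (le_of_lt halo) (ha j n).1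
  have hb0 : ∀ j n, 0 ≤ b j n := fun j n => le_trans (le_of_lt hblo) (hb j n).1
  have hb1 : ∀ j n, b j n < 1 := fun j n => lt_of_le_of_lt (hb j n).2 hbhi1
  have ha1 : ∀ j n, a j n < 1 := fun j n => lt_of_le_of_lt (ha j n).2 hahi1
  -- membership
  have hyK : ∀ n, x n ∈ K → y n ∈ K := by
    intro n hxn
    rw [hy n]
    have key := hKco.sum_mem (t := Finset.univ)
      (w := fun j : Fin (m+1) => b j n)
      (z := Fin.cases (x n) (fun i => (I i)^[n] (x n)))
      (fun j _ => hb0 j n) (hbsum n)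
      (fun j _ => by
        induction j using Fin.cases with
        | zero => simpa using hxn
        | succ i => simpa using hIiter i n hxn)
    rw [Fin.sum_univ_succ] at key
    simpa using key
  have hxK : ∀ n, x n ∈ K := by
    intro n
    induction n with
    | zero => exact hx0
    | succ n ih =>
      rw [hxrec n]
      have hyn := hyK n ih
      have key := hKco.sum_mem (t := Finset.univ)
        (w := fun j : Fin (m+1) => a j n)
        (z := Fin.cases (x n) (fun i => (T i)^[n] (y n)))
        (fun j _ => ha0 j n) (hasum n)
        (fun j _ => by
          induction j using Fin.cases with
          | zero => simpa using ih
          | succ i => simpa using hTiter i n hyn)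
      rw [Fin.sum_univ_succ] at key
      simpa using key
  -- gauge linear bounds
  have hψbd : ∀ i ζ, 0 ≤ ζ → ψ i ζ ≤ ψ i (N i) + Ns i * ζ := by
    intro i ζ hζ
    rcases le_or_gt ζ (N i) with h | h
    · have h1 : ψ i ζ ≤ ψ i (N i) :=
        (hψmono i).monotoneOn hζ (le_of_lt (hN i)) h
      have h2 : 0 ≤ Ns i * ζ := mul_nonneg (le_of_lt (hNs i)) hζ
      linarith
    · have h1 := hψbound i ζ (le_of_lt h)
      have h2 : 0 ≤ ψ i (N i) := hψpos i (N i) (le_of_lt (hN i))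
      linarith
  have hφbd : ∀ i ζ, 0 ≤ ζ → φ i ζ ≤ φ i (M i) + Ms i * ζ := by
    intro i ζ hζ
    rcases le_or_gt ζ (M i) with h | h
    · have h1 : φ i ζ ≤ φ i (M i) :=
        (hφmono i).monotoneOn hζ (le_of_lt (hM i)) h
      have h2 : 0 ≤ Ms i * ζ := mul_nonneg (le_of_lt (hMs i)) hζ
      linarith
    · have h1 := hφbound i ζ (le_of_lt h)
      have h2 : 0 ≤ φ i (M i) := hφpos i (M i) (le_of_lt (hM i))
      linarith
  -- basic bound for I iterates
  have hIbnd : ∀ i n, 1 ≤ n → ∀ z ∈ K, ‖(I i)^[n] z - p‖ ≤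
      (1 + tμ i n * Ns i) * ‖z - p‖ + (tμ i n * ψ i (N i) + tlam i n) := by
    intro i n hn z hz
    have h1 := hI i n hn z hz p hpK
    rw [hIfix i n] at h1
    have h2 : ψ i ‖z - p‖ ≤ ψ i (N i) + Ns i * ‖z - p‖ := hψbd i _ (norm_nonneg _)
    have h3 : tμ i n * ψ i ‖z - p‖ ≤ tμ i n * (ψ i (N i) + Ns i * ‖z - p‖) :=
      mul_le_mul_of_nonneg_left h2 (htμ0 i n)
    nlinarith
  set A : Fin m → ℕ → ℝ := fun i n => (1 + μ i n * Ms i) * (1 + tμ i n * Ns i) with hA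
  set C : Fin m → ℕ → ℝ := fun i n =>
    (1 + μ i n * Ms i) * (tμ i n * ψ i (N i) + tlam i n) + (μ i n * φ i (M i) + lam i n) with hC
  have hTbnd : ∀ i n, 1 ≤ n → ∀ z ∈ K, ‖(T i)^[n] z - p‖ ≤ A i n * ‖z - p‖ + C i n := by
    intro i n hn z hz
    have h1 := hT i n hn z hz p hpK
    rw [hTfix i n, hIfix i n] at h1
    have h2 : φ i ‖(I i)^[n] z - p‖ ≤ φ i (M i) + Ms i * ‖(I i)^[n] z - p‖ :=
      hφbd i _ (norm_nonneg _)
    have h3 : μ i n * φ i ‖(I i)^[n] z - p‖ ≤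
        μ i n * (φ i (M i) + Ms i * ‖(I i)^[n] z - p‖) :=
      mul_le_mul_of_nonneg_left h2 (hμ0 i n)
    have h4 : ‖(T i)^[n] z - p‖ ≤
        (1 + μ i n * Ms i) * ‖(I i)^[n] z - p‖ + (μ i n * φ i (M i) + lam i n) := by
      nlinarith
    have h5 := hIbnd i n hn z hz
    have h6 : (1 + μ i n * Ms i) * ‖(I i)^[n] z - p‖ ≤
        (1 + μ i n * Ms i) * ((1 + tμ i n * Ns i) * ‖z - p‖ + (tμ i n * ψ i (N i) + tlam i n)) := by
      apply mul_le_mul_of_nonneg_left h5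
      have := hμ0 i n; have := hMs i; positivity
    simp only [hA, hC]
    nlinarith
  set d : ℕ → ℝ := fun n => ‖x n - p‖ with hdd
  have hd0 : ∀ n, 0 ≤ d n := fun n => norm_nonneg _
  set B : ℕ → ℝ := fun n => ∑ i : Fin m, tμ i n * Ns i with hB
  set E : ℕ → ℝ := fun n => ∑ i : Fin m, (tμ i n * ψ i (N i) + tlam i n) with hE
  set Q : ℕ → ℝ := fun n => (1 + B n) * d n + E n with hQ
  have hB0 : ∀ n, 0 ≤ B n := by
    intro n; apply Finset.sum_nonneg; intro i _
    have := htμ0 i n; have := hNs i; positivity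
  have hE0 : ∀ n, 0 ≤ E n := by
    intro n; apply Finset.sum_nonneg; intro i _
    have := htμ0 i n; have := htlam0 i n
    have := hψpos i (N i) (le_of_lt (hN i)); positivity
  -- general decomposition lemma
  have hdec : ∀ (c : Fin (m+1) → ℕ → ℝ), (∀ n, ∑ j, c j n = 1) → ∀ n (z0 : X) (w : Fin m → X),
      c 0 n • z0 + ∑ i : Fin m, c i.succ n • w i - p =
      c 0 n • (z0 - p) + ∑ i : Fin m, c i.succ n • (w i - p) := by
    intro c hc n z0 w
    have h1 : c 0 n + ∑ i : Fin m, c i.succ n = 1 := by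
      rw [← Fin.sum_univ_succ (f := fun j => c j n)]; exact hc n
    have hsplit : ∑ i : Fin m, c i.succ n • (w i - p) =
        (∑ i : Fin m, c i.succ n • w i) - (∑ i : Fin m, c i.succ n) • p := by
      simp only [smul_sub, Finset.sum_sub_distrib, Finset.sum_smul]
    rw [smul_sub, hsplit]
    have hp : p = c 0 n • p + (∑ i : Fin m, c i.succ n) • p := by
      rw [← add_smul, h1, one_smul]
    conv_lhs => rw [hp]
    abel
  -- decomposition of y n - p
  have hyp : ∀ n, y n - p =
      b 0 n • (x n - p) + ∑ i : Fin m, b i.succ n • ((I i)^[n] (x n) - p) := by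
    intro n
    rw [hy n]
    exact hdec b hbsum n (x n) _
  -- bounds for I-iterates applied to x n, and y
  have hIQ : ∀ i n, 1 ≤ n → ‖(I i)^[n] (x n) - p‖ ≤ Q n := by
    intro i n hn
    have h1 := hIbnd i n hn (x n) (hxK n)
    have h2 : tμ i n * Ns i ≤ B n :=
      Finset.single_le_sum (f := fun j => tμ j n * Ns j)
        (fun j _ => mul_nonneg (htμ0 j n) (le_of_lt (hNs j))) (Finset.mem_univ i)
    have h3 : tμ i n * ψ i (N i) + tlam i n ≤ E n :=
      Finset.single_le_sum (f := fun j => tμ j n * ψ j (N j) + tlam j n)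
        (fun j _ => by
          have := htμ0 j n; have := htlam0 j n
          have := hψpos j (N j) (le_of_lt (hN j)); positivity) (Finset.mem_univ i)
    have h4 := hd0 n
    simp only [hQ]
    nlinarith
  have hyQ : ∀ n, 1 ≤ n → ‖y n - p‖ ≤ Q n := by
    intro n hn
    have hsum1 := hbsum n
    rw [Fin.sum_univ_succ] at hsum1
    rw [hyp n]
    have step : ∀ i : Fin m, b i.succ n * ‖(I i)^[n] (x n) - p‖ ≤
        b i.succ n * d n + (tμ i n * Ns i * d n + (tμ i n * ψ i (N i) + tlam i n)) := by
      intro i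
      have h5 := hIbnd i n hn (x n) (hxK n)
      have hbi0 := hb0 i.succ n
      have hbi1 := le_of_lt (hb1 i.succ n)
      have hc0 : 0 ≤ tμ i n * Ns i := mul_nonneg (htμ0 i n) (le_of_lt (hNs i))
      have he0 : 0 ≤ tμ i n * ψ i (N i) + tlam i n := by
        have := htμ0 i n; have := htlam0 i n
        have := hψpos i (N i) (le_of_lt (hN i)); positivity
      have hdn := hd0 n
      simp only [hdd]
      simp only [hdd] at hdn
      nlinarith [mul_le_mul_of_nonneg_left h5 hbi0, mul_nonneg hc0 hdn]
    calc ‖b 0 n • (x n - p) + ∑ i : Fin m, b i.succ n • ((I i)^[n] (x n) - p)‖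
        ≤ b 0 n * d n + ∑ i : Fin m, b i.succ n * ‖(I i)^[n] (x n) - p‖ := by
          refine (norm_add_le _ _).trans (add_le_add ?_ ?_)
          · rw [norm_smul, Real.norm_of_nonneg (hb0 0 n)]
          · refine (norm_sum_le _ _).trans ?_
            refine Finset.sum_le_sum fun i _ => ?_
            rw [norm_smul, Real.norm_of_nonneg (hb0 i.succ n)]
      _ ≤ b 0 n * d n + ∑ i : Fin m, (b i.succ n * d n +
            (tμ i n * Ns i * d n + (tμ i n * ψ i (N i) + tlam i n))) :=
          add_le_add_right (Finset.sum_le_sum fun i _ => step i) _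
      _ = (b 0 n + ∑ i : Fin m, b i.succ n) * d n + (B n * d n + E n) := by
          rw [Finset.sum_add_distrib, Finset.sum_add_distrib, ← Finset.sum_mul, ← Finset.sum_mul]
          simp only [hB, hE]; ring
      _ = Q n := by rw [hsum1]; simp only [hQ]; ring
  -- sum error sequences
  set ss : ℕ → ℝ := fun n => ∑ i : Fin m, (A i n - 1) with hss
  set tt : ℕ → ℝ := fun n => ∑ i : Fin m, C i n with htt
  have hA1 : ∀ i n, 1 ≤ A i n := by
    intro i n
    have h1 := mul_nonneg (hμ0 i n) (le_of_lt (hMs i))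
    have h2 := mul_nonneg (htμ0 i n) (le_of_lt (hNs i))
    simp only [hA]; nlinarith
  have hC0 : ∀ i n, 0 ≤ C i n := by
    intro i n
    have h1 := mul_nonneg (hμ0 i n) (le_of_lt (hMs i))
    have h2 := htμ0 i n; have h3 := htlam0 i n
    have h4 := hψpos i (N i) (le_of_lt (hN i))
    have h5 := hφpos i (M i) (le_of_lt (hM i))
    have h6 := hμ0 i n; have h7 := hlam0 i n
    simp only [hC]; positivity
  have hss0 : ∀ n, 0 ≤ ss n := by
    intro n; exact Finset.sum_nonneg fun i _ => by linarith [hA1 i n]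
  have htt0 : ∀ n, 0 ≤ tt n := by
    intro n; exact Finset.sum_nonneg fun i _ => hC0 i n
  have hsssum : Summable ss := by
    rw [hss]
    refine summable_finset_sum _ _ fun i _ => ?_
    have h1 : (fun n => A i n - 1) =
        fun n => μ i n * Ms i + tμ i n * Ns i + μ i n * Ms i * (tμ i n * Ns i) := by
      funext n; simp only [hA]; ring
    rw [h1]
    refine (((hμsum i).mul_right (Ms i)).add ((htμsum i).mul_right (Ns i))).add ?_
    refine Summable.of_nonneg_of_le
      (g := fun n => μ i n * Ms i * (tμ i n * Ns i))
      (f := fun n => ((∑' k, μ i k) * Ms i * Ns i) * tμ i n) ?_ ?_ ((htμsum i).mul_left _)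
    · intro n
      have := hμ0 i n; have := htμ0 i n
      have := le_of_lt (hMs i); have := le_of_lt (hNs i); positivity
    · intro n
      have h2 : μ i n ≤ ∑' k, μ i k := Summable.le_tsum (hμsum i) n (fun k _ => hμ0 i k)
      have h3 : (0:ℝ) ≤ Ms i * Ns i * tμ i n := by
        have := htμ0 i n; have := le_of_lt (hNs i); have := le_of_lt (hMs i); positivity
      calc μ i n * Ms i * (tμ i n * Ns i) = (Ms i * Ns i * tμ i n) * μ i n := by ring
        _ ≤ (Ms i * Ns i * tμ i n) * (∑' k, μ i k) := mul_le_mul_of_nonneg_left h2 h3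
        _ = ((∑' k, μ i k) * Ms i * Ns i) * tμ i n := by ring
  have httsum : Summable tt := by
    rw [htt]
    refine summable_finset_sum _ _ fun i _ => ?_
    refine Summable.of_nonneg_of_le (fun n => hC0 i n)
      (f := fun n => (1 + (∑' k, μ i k) * Ms i) * (tμ i n * ψ i (N i) + tlam i n) +
        (μ i n * φ i (M i) + lam i n)) ?_
      (((((htμsum i).mul_right _).add (htlamsum i)).mul_left _).add
        (((hμsum i).mul_right _).add (hlamsum i)))
    intro n
    have h2 : μ i n ≤ ∑' k, μ i k := Summable.le_tsum (hμsum i) n (fun k _ => hμ0 i k)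
    have h3 : 0 ≤ tμ i n * ψ i (N i) + tlam i n := by
      have := htμ0 i n; have := htlam0 i n
      have := hψpos i (N i) (le_of_lt (hN i)); positivity
    have := hMs i
    simp only [hC]
    nlinarith [mul_le_mul_of_nonneg_right (mul_le_mul_of_nonneg_right h2 (le_of_lt (hMs i))) h3]
  have hBsum : Summable B := by
    rw [hB]; exact summable_finset_sum _ _ fun i _ => (htμsum i).mul_right (Ns i)
  have hEsum : Summable E := by
    rw [hE]
    exact summable_finset_sum _ _ fun i _ => ((htμsum i).mul_right _).add (htlamsum i)
  -- main recursive estimate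
  have hd1 : ∀ n, 1 ≤ n →
      d (n+1) ≤ a 0 n * d n + (1 - a 0 n) * ((1 + ss n) * ‖y n - p‖) + tt n := by
    intro n hn
    have hxdec : x (n+1) - p =
        a 0 n • (x n - p) + ∑ i : Fin m, a i.succ n • ((T i)^[n] (y n) - p) := by
      rw [hxrec n]; exact hdec a hasum n (x n) _
    have hsum1 := hasum n
    rw [Fin.sum_univ_succ] at hsum1
    have hyKn := hyK n (hxK n)
    have step : ∀ i : Fin m, a i.succ n * ‖(T i)^[n] (y n) - p‖ ≤
        a i.succ n * ((1 + ss n) * ‖y n - p‖) + C i n := by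
      intro i
      have h5 := hTbnd i n hn (y n) hyKn
      have hAi : A i n ≤ 1 + ss n := by
        have h6 : A i n - 1 ≤ ss n := by
          simp only [hss]
          exact Finset.single_le_sum (f := fun j => A j n - 1)
            (fun j _ => sub_nonneg.2 (hA1 j n)) (Finset.mem_univ i)
        linarith
      have hai0 := ha0 i.succ n
      have hai1 := le_of_lt (ha1 i.succ n)
      have hCn := hC0 i n
      have hr0 : (0:ℝ) ≤ ‖y n - p‖ := norm_nonneg _
      nlinarith [mul_le_mul_of_nonneg_left h5 hai0,
        mul_le_mul_of_nonneg_right hAi hr0]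
    have hnorm : d (n+1) ≤ a 0 n * d n + ∑ i : Fin m, a i.succ n * ‖(T i)^[n] (y n) - p‖ := by
      simp only [hdd]
      rw [hxdec]
      refine (norm_add_le _ _).trans (add_le_add ?_ ?_)
      · rw [norm_smul, Real.norm_of_nonneg (ha0 0 n)]
      · refine (norm_sum_le _ _).trans ?_
        refine Finset.sum_le_sum fun i _ => ?_
        rw [norm_smul, Real.norm_of_nonneg (ha0 i.succ n)]
    calc d (n+1) ≤ a 0 n * d n + ∑ i : Fin m, a i.succ n * ‖(T i)^[n] (y n) - p‖ := hnorm
      _ ≤ a 0 n * d n + ∑ i : Fin m, (a i.succ n * ((1 + ss n) * ‖y n - p‖) + C i n) :=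
          add_le_add_right (Finset.sum_le_sum fun i _ => step i) _
      _ = a 0 n * d n + (∑ i : Fin m, a i.succ n) * ((1 + ss n) * ‖y n - p‖) + tt n := by
          rw [Finset.sum_add_distrib, ← Finset.sum_mul]
          simp only [htt]; ring
      _ = a 0 n * d n + (1 - a 0 n) * ((1 + ss n) * ‖y n - p‖) + tt n := by
          have h7 : (∑ i : Fin m, a i.succ n) = 1 - a 0 n := by linarith
          rw [h7]
  set σ : ℕ → ℝ := fun n => ss n + B n + ss n * B n with hσ
  set τ : ℕ → ℝ := fun n => (1 + ss n) * E n + tt n with hτ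
  have hσ0 : ∀ n, 0 ≤ σ n := by
    intro n; simp only [hσ]
    linarith [mul_nonneg (hss0 n) (hB0 n), hss0 n, hB0 n]
  have hτ0 : ∀ n, 0 ≤ τ n := by
    intro n; simp only [hτ]
    linarith [mul_nonneg (by linarith [hss0 n] : (0:ℝ) ≤ 1 + ss n) (hE0 n), htt0 n]
  have hprod : Summable (fun n => ss n * B n) := by
    refine Summable.of_nonneg_of_le
      (fun n => mul_nonneg (hss0 n) (hB0 n)) (fun n => ?_) (hBsum.mul_left (∑' k, ss k))
    have h2 : ss n ≤ ∑' k, ss k := Summable.le_tsum hsssum n (fun k _ => hss0 k)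
    exact mul_le_mul_of_nonneg_right h2 (hB0 n)
  have hσsum : Summable σ := by
    rw [hσ]; exact (hsssum.add hBsum).add hprod
  have hsE : Summable (fun n => (1 + ss n) * E n) := by
    refine Summable.of_nonneg_of_le
      (fun n => mul_nonneg (by linarith [hss0 n]) (hE0 n)) (fun n => ?_)
      (hEsum.mul_left (1 + ∑' k, ss k))
    have h2 : ss n ≤ ∑' k, ss k := Summable.le_tsum hsssum n (fun k _ => hss0 k)
    exact mul_le_mul_of_nonneg_right (by linarith) (hE0 n)
  have hτsum : Summable τ := by
    rw [hτ]; exact hsE.add httsum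
  have hy0 : y 0 = x 0 := by
    rw [hy 0]
    simp only [Function.iterate_zero, id_eq]
    have h1 := hbsum 0
    rw [Fin.sum_univ_succ] at h1
    rw [← Finset.sum_smul, ← add_smul, h1, one_smul]
  have hx1 : x 1 = x 0 := by
    rw [hxrec 0, hy0]
    simp only [Function.iterate_zero, id_eq]
    have h1 := hasum 0
    rw [Fin.sum_univ_succ] at h1
    rw [← Finset.sum_smul, ← add_smul, h1, one_smul]
  have hrecd : ∀ n, d (n+1) ≤ (1 + σ n) * d n + τ n := by
    intro n
    rcases Nat.eq_zero_or_pos n with rfl | hn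
    · have h1 : d 1 = d 0 := by simp only [hdd, hx1]
      have := hσ0 0; have := hτ0 0; have := hd0 0
      nlinarith
    · have h1 := hd1 n hn
      have h2 := hyQ n hn
      have ha0n := ha0 0 n
      have ha1n := le_of_lt (ha1 0 n)
      have hssn := hss0 n; have hBn := hB0 n; have hEn := hE0 n
      have httn := htt0 n; have hdn := hd0 n
      have hr0 : (0:ℝ) ≤ ‖y n - p‖ := norm_nonneg _
      simp only [hσ, hτ, hQ] at *
      nlinarith [mul_le_mul_of_nonneg_left h2
          (mul_nonneg (by linarith : (0:ℝ) ≤ 1 - a 0 n) (by linarith : (0:ℝ) ≤ 1 + ss n)),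
        mul_nonneg (mul_nonneg ha0n hdn) (by nlinarith : (0:ℝ) ≤ ss n + B n + ss n * B n),
        mul_nonneg ha0n (mul_nonneg (by linarith : (0:ℝ) ≤ 1 + ss n) hEn)]
  obtain ⟨L, hL⟩ := seq_conv hd0 hσ0 hτ0 hσsum hτsum hrecd
  have hL0 : 0 ≤ L := le_of_tendsto_of_tendsto' tendsto_const_nhds hL (fun n => hd0 n)
  -- limits of error sequences
  have hBlim : Tendsto B atTop (nhds 0) := hBsum.tendsto_atTop_zero
  have hElim : Tendsto E atTop (nhds 0) := hEsum.tendsto_atTop_zero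
  have hsslim : Tendsto ss atTop (nhds 0) := hsssum.tendsto_atTop_zero
  have httlim : Tendsto tt atTop (nhds 0) := httsum.tendsto_atTop_zero
  have hσlim : Tendsto σ atTop (nhds 0) := hσsum.tendsto_atTop_zero
  have hτlim : Tendsto τ atTop (nhds 0) := hτsum.tendsto_atTop_zero
  have hQlim : Tendsto Q atTop (nhds L) := by
    have : Tendsto (fun n => (1 + B n) * d n + E n) atTop (nhds ((1 + 0) * L + 0)) :=
      (((tendsto_const_nhds (x := (1:ℝ))).add hBlim).mul hL).add hElim
    simpa using this
  -- ‖y n - p‖ → L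
  have hylim : Tendsto (fun n => ‖y n - p‖) atTop (nhds L) := by
    have key : ∀ n, 1 ≤ n →
        (1 - ahi) * (Q n - ‖y n - p‖) ≤ (1 + σ n) * d n + τ n - d (n+1) := by
      intro n hn
      have h1 := hd1 n hn
      have h2 := hyQ n hn
      have ha2 := (ha 0 n).2
      have ha0n := ha0 0 n
      have hssn := hss0 n; have hBn := hB0 n; have hEn := hE0 n
      have httn := htt0 n; have hdn := hd0 n
      have hr0 : (0:ℝ) ≤ ‖y n - p‖ := norm_nonneg _
      have hfac : (1:ℝ) - ahi ≤ (1 - a 0 n) * (1 + ss n) := by nlinarith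
      have hw0 : (0:ℝ) ≤ Q n - ‖y n - p‖ := by linarith
      have t3 : (1 - ahi) * (Q n - ‖y n - p‖) ≤
          ((1 - a 0 n) * (1 + ss n)) * (Q n - ‖y n - p‖) :=
        mul_le_mul_of_nonneg_right hfac hw0
      have t1 : (0:ℝ) ≤ a 0 n * (d n * (ss n + B n + ss n * B n)) := by
        have : (0:ℝ) ≤ ss n + B n + ss n * B n := by nlinarith
        positivity
      have t2 : (0:ℝ) ≤ a 0 n * ((1 + ss n) * E n) := by
        have : (0:ℝ) ≤ 1 + ss n := by linarith
        positivity
      simp only [hσ, hτ, hQ] at *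
      nlinarith
    have hrhs : Tendsto (fun n => (1 + σ n) * d n + τ n - d (n+1)) atTop (nhds 0) := by
      have h1 : Tendsto (fun n => (1 + σ n) * d n + τ n) atTop (nhds L) := by
        have := ((tendsto_const_nhds (x := (1:ℝ)).add hσlim).mul hL).add hτlim
        simpa using this
      have h2 : Tendsto (fun n => d (n+1)) atTop (nhds L) :=
        hL.comp (tendsto_add_atTop_nat 1)
      simpa using h1.sub h2
    have hwlim : Tendsto (fun n => Q n - ‖y n - p‖) atTop (nhds 0) := by
      have hpos : (0:ℝ) < 1 - ahi := by linarith
      have hub : Tendsto (fun n => (1 - ahi)⁻¹ * ((1 + σ n) * d n + τ n - d (n+1)))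
          atTop (nhds 0) := by
        have := hrhs.const_mul ((1 - ahi)⁻¹)
        simpa using this
      refine tendsto_of_tendsto_of_tendsto_of_le_of_le'
        (tendsto_const_nhds (x := (0:ℝ))) hub ?_ ?_
      · filter_upwards [eventually_ge_atTop 1] with n hn
        linarith [hyQ n hn]
      · filter_upwards [eventually_ge_atTop 1] with n hn
        have h4 := mul_le_mul_of_nonneg_left (key n hn) (inv_nonneg.2 (le_of_lt hpos))
        rwa [inv_mul_cancel_left₀ (ne_of_gt hpos)] at h4
    have : Tendsto (fun n => Q n - (Q n - ‖y n - p‖)) atTop (nhds (L - 0)) :=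
      hQlim.sub hwlim
    simp only [sub_sub_cancel, sub_zero] at this
    exact this
  -- eventual bounds for Schu
  have hQev : ∀ ε, 0 < ε → ∀ᶠ n in atTop, Q n ≤ L + ε := by
    intro ε hε
    exact hQlim.eventually (eventually_le_nhds (lt_add_of_pos_right L hε))
  -- first Schu application : ‖x n - y n‖ → 0
  have hbsum' : ∀ n, (∑ i : Fin m, b i.succ n) = 1 - b 0 n := by
    intro n
    have h1 := hbsum n
    rw [Fin.sum_univ_succ] at h1
    linarith
  have hLev : ∀ ε, 0 < ε → ∀ᶠ n in atTop, Q n ≤ L + ε := hQev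
  have hxy : Tendsto (fun n => ‖x n - y n‖) atTop (nhds 0) := by
    set v0 : ℕ → X := fun n =>
      (1 - b 0 n)⁻¹ • (∑ i : Fin m, b i.succ n • ((I i)^[n] (x n) - p)) with hv0
    have hbne : ∀ n, (1:ℝ) - b 0 n ≠ 0 := fun n => ne_of_gt (by linarith [hb1 0 n])
    have hcomb : ∀ n, b 0 n • (x n - p) + (1 - b 0 n) • v0 n = y n - p := by
      intro n
      simp only [hv0]
      rw [smul_inv_smul₀ (hbne n)]
      exact (hyp n).symm
    have hvbnd : ∀ n, 1 ≤ n → ‖v0 n‖ ≤ Q n := by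
      intro n hn
      simp only [hv0]
      rw [norm_smul, Real.norm_of_nonneg (inv_nonneg.2 (by linarith [hb1 0 n]))]
      have h2 : ‖∑ i : Fin m, b i.succ n • ((I i)^[n] (x n) - p)‖ ≤
          ∑ i : Fin m, b i.succ n * ‖(I i)^[n] (x n) - p‖ := by
        refine (norm_sum_le _ _).trans ?_
        refine Finset.sum_le_sum fun i _ => ?_
        rw [norm_smul, Real.norm_of_nonneg (hb0 i.succ n)]
      have h3 : ∑ i : Fin m, b i.succ n * ‖(I i)^[n] (x n) - p‖ ≤
          ∑ i : Fin m, b i.succ n * Q n :=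
        Finset.sum_le_sum fun i _ =>
          mul_le_mul_of_nonneg_left (hIQ i n hn) (hb0 i.succ n)
      have h4 : (∑ i : Fin m, b i.succ n * Q n) = (1 - b 0 n) * Q n := by
        rw [← Finset.sum_mul, hbsum' n]
      have h5 : (0:ℝ) < 1 - b 0 n := by linarith [hb1 0 n]
      calc (1 - b 0 n)⁻¹ * ‖∑ i : Fin m, b i.succ n • ((I i)^[n] (x n) - p)‖
          ≤ (1 - b 0 n)⁻¹ * ((1 - b 0 n) * Q n) := by
            apply mul_le_mul_of_nonneg_left _ (inv_nonneg.2 (le_of_lt h5))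
            rw [← h4]; exact h2.trans h3
        _ = Q n := by rw [inv_mul_cancel_left₀ (ne_of_gt h5)]
    have hu0 : ∀ ε, 0 < ε → ∀ᶠ n in atTop, ‖x n - p‖ ≤ L + ε := by
      intro ε hε
      exact hL.eventually (eventually_le_nhds (lt_add_of_pos_right L hε))
    have hv0ev : ∀ ε, 0 < ε → ∀ᶠ n in atTop, ‖v0 n‖ ≤ L + ε := by
      intro ε hε
      filter_upwards [hLev ε hε, eventually_ge_atTop 1] with n h1 h2
      exact (hvbnd n h2).trans h1
    have hcl : Tendsto (fun n => ‖b 0 n • (x n - p) + (1 - b 0 n) • v0 n‖)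
        atTop (nhds L) := by
      have : (fun n => ‖b 0 n • (x n - p) + (1 - b 0 n) • v0 n‖) =
          fun n => ‖y n - p‖ := by
        funext n; rw [hcomb n]
      rw [this]; exact hylim
    have hsch := schu hL0 hblo hbhi1 (fun n => hb 0 n) hu0 hv0ev hcl
    have hbound : ∀ n, ‖x n - y n‖ ≤ ‖(x n - p) - v0 n‖ := by
      intro n
      have h6 : y n = p + (b 0 n • (x n - p) + (1 - b 0 n) • v0 n) := by
        rw [hcomb n]; abel
      have h5 : x n - y n = (1 - b 0 n) • ((x n - p) - v0 n) := by
        rw [h6]; module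
      rw [h5, norm_smul, Real.norm_of_nonneg (by linarith [hb1 0 n] : (0:ℝ) ≤ 1 - b 0 n)]
      exact mul_le_of_le_one_left (norm_nonneg _) (by linarith [hb0 0 n])
    exact squeeze_zero (fun n => norm_nonneg _) hbound hsch
  -- second Schu application per i
  intro i
  have hyI : Tendsto (fun n => ‖y n - (I i)^[n] (x n)‖) atTop (nhds 0) := by
    set u : ℕ → X := fun n => (I i)^[n] (x n) - p with hu
    set v : ℕ → X := fun n => (1 - b i.succ n)⁻¹ • (y n - p - b i.succ n • u n) with hv
    have hbne : ∀ n, (1:ℝ) - b i.succ n ≠ 0 := fun n => ne_of_gt (by linarith [hb1 i.succ n])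
    have hcomb : ∀ n, b i.succ n • u n + (1 - b i.succ n) • v n = y n - p := by
      intro n
      simp only [hv]
      rw [smul_inv_smul₀ (hbne n)]
      abel
    have hsplit : ∀ n, y n - p - b i.succ n • u n =
        b 0 n • (x n - p) + ∑ j ∈ Finset.univ.erase i, b j.succ n • ((I j)^[n] (x n) - p) := by
      intro n
      rw [hyp n, ← Finset.add_sum_erase _ _ (Finset.mem_univ i)]
      simp only [hu]
      abel
    have hcoef : ∀ n, (∑ j ∈ Finset.univ.erase i, b j.succ n) = 1 - b 0 n - b i.succ n := by
      intro n
      have h2 : b i.succ n + ∑ j ∈ Finset.univ.erase i, b j.succ n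
          = ∑ j : Fin m, b j.succ n :=
        Finset.add_sum_erase _ (fun j => b j.succ n) (Finset.mem_univ i)
      have h3 := hbsum' n
      linarith
    have hdQ : ∀ n, d n ≤ Q n := by
      intro n
      have := hB0 n; have := hE0 n; have := hd0 n
      simp only [hQ]; nlinarith
    have hvbnd : ∀ n, 1 ≤ n → ‖v n‖ ≤ Q n := by
      intro n hn
      simp only [hv]
      have h5 : (0:ℝ) < 1 - b i.succ n := by linarith [hb1 i.succ n]
      rw [norm_smul, Real.norm_of_nonneg (inv_nonneg.2 (le_of_lt h5))]
      have h2 : ‖y n - p - b i.succ n • u n‖ ≤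
          b 0 n * Q n + ∑ j ∈ Finset.univ.erase i, b j.succ n * Q n := by
        rw [hsplit n]
        refine (norm_add_le _ _).trans (add_le_add ?_ ?_)
        · rw [norm_smul, Real.norm_of_nonneg (hb0 0 n)]
          exact mul_le_mul_of_nonneg_left ((hdQ n)) (hb0 0 n)
        · refine (norm_sum_le _ _).trans ?_
          refine Finset.sum_le_sum fun j _ => ?_
          rw [norm_smul, Real.norm_of_nonneg (hb0 j.succ n)]
          exact mul_le_mul_of_nonneg_left (hIQ j n hn) (hb0 j.succ n)
      have h3 : b 0 n * Q n + ∑ j ∈ Finset.univ.erase i, b j.succ n * Q n =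
          (1 - b i.succ n) * Q n := by
        rw [← Finset.sum_mul, hcoef n]; ring
      calc (1 - b i.succ n)⁻¹ * ‖y n - p - b i.succ n • u n‖
          ≤ (1 - b i.succ n)⁻¹ * ((1 - b i.succ n) * Q n) := by
            apply mul_le_mul_of_nonneg_left _ (inv_nonneg.2 (le_of_lt h5))
            rw [← h3]; exact h2
        _ = Q n := by rw [inv_mul_cancel_left₀ (ne_of_gt h5)]
    have huev : ∀ ε, 0 < ε → ∀ᶠ n in atTop, ‖u n‖ ≤ L + ε := by
      intro ε hε
      filter_upwards [hLev ε hε, eventually_ge_atTop 1] with n h1 h2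
      exact (hIQ i n h2).trans h1
    have hvev : ∀ ε, 0 < ε → ∀ᶠ n in atTop, ‖v n‖ ≤ L + ε := by
      intro ε hε
      filter_upwards [hLev ε hε, eventually_ge_atTop 1] with n h1 h2
      exact (hvbnd n h2).trans h1
    have hcl : Tendsto (fun n => ‖b i.succ n • u n + (1 - b i.succ n) • v n‖)
        atTop (nhds L) := by
      have heq : (fun n => ‖b i.succ n • u n + (1 - b i.succ n) • v n‖) =
          fun n => ‖y n - p‖ := by
        funext n; rw [hcomb n]
      rw [heq]; exact hylim
    have hsch := schu hL0 hblo hbhi1 (fun n => hb i.succ n) huev hvev hcl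
    have hbound : ∀ n, ‖y n - (I i)^[n] (x n)‖ ≤ ‖u n - v n‖ := by
      intro n
      have h6 : y n = p + (b i.succ n • u n + (1 - b i.succ n) • v n) := by
        rw [hcomb n]; abel
      have h5 : y n - (I i)^[n] (x n) = (1 - b i.succ n) • (v n - u n) := by
        rw [h6]
        have h7 : (I i)^[n] (x n) = p + u n := by simp only [hu]; abel
        rw [h7]; module
      rw [h5, norm_smul,
        Real.norm_of_nonneg (by linarith [hb1 i.succ n] : (0:ℝ) ≤ 1 - b i.succ n),
        norm_sub_rev]
      exact mul_le_of_le_one_left (norm_nonneg _) (by linarith [hb0 i.succ n])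
    exact squeeze_zero (fun n => norm_nonneg _) hbound hsch
  have hfinal : ∀ n, ‖x n - (I i)^[n] (x n)‖ ≤ ‖x n - y n‖ + ‖y n - (I i)^[n] (x n)‖ := by
    intro n
    have : x n - (I i)^[n] (x n) = (x n - y n) + (y n - (I i)^[n] (x n)) := by abel
    rw [this]; exact norm_add_le _ _
  have hzero : Tendsto (fun n => ‖x n - y n‖ + ‖y n - (I i)^[n] (x n)‖) atTop (nhds 0) := by
    simpa using hxy.add hyI
  exact squeeze_zero (fun n => norm_nonneg _) hfinal hzero
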